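/- Combinatorial Shearer's lemma: Let 𝓕 be a finite multiset of subsets of {1,…,n} with each i ∈ {1,…,n} contained in at least t members of 𝓕 (t ≥ 1), and let 𝓐 be a family of subsets of {1,…,n}. Then |𝓐|ᵗ ≤ Π_{F∈𝓕} |trace_F(𝓐)|, where trace_F(𝓐) = {A ∩ F : A ∈ 𝓐}. -/

import Mathlib

open Finset

/-- Mahler-type inequality (superadditivity of geometric means), in natural-number form. -/
lemma mahler_nat_aux {ι : Type*} (S : Finset ι) {t : ℕ} (htS : S.card = t) (ht : 1 ≤ t)
    (K P Q : ℕ) (u v : ι → ℕ)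
    (hP : P ^ t ≤ K * ∏ j ∈ S, u j) (hQ : Q ^ t ≤ K * ∏ j ∈ S, v j) :
    (P + Q) ^ t ≤ K * ∏ j ∈ S, (u j + v j) := by
  have ht0 : t ≠ 0 := Nat.one_le_iff_ne_zero.mp ht
  by_cases h0 : K * ∏ j ∈ S, (u j + v j) = 0
  · have hu0 : K * ∏ j ∈ S, u j = 0 := by
      rcases Nat.mul_eq_zero.mp h0 with hK | hprod
      · simp [hK]
      · obtain ⟨j, hj, hjv⟩ := Finset.prod_eq_zero_iff.mp hprod
        have : u j = 0 := by omega
        rw [Finset.prod_eq_zero hj this, mul_zero]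
    have hv0 : K * ∏ j ∈ S, v j = 0 := by
      rcases Nat.mul_eq_zero.mp h0 with hK | hprod
      · simp [hK]
      · obtain ⟨j, hj, hjv⟩ := Finset.prod_eq_zero_iff.mp hprod
        have : v j = 0 := by omega
        rw [Finset.prod_eq_zero hj this, mul_zero]
    have hP0 : P = 0 := by
      have := hP.trans_eq hu0
      exact pow_eq_zero_iff ht0 |>.mp (Nat.le_zero.mp this)
    have hQ0 : Q = 0 := by
      have := hQ.trans_eq hv0
      exact pow_eq_zero_iff ht0 |>.mp (Nat.le_zero.mp this)
    simp [hP0, hQ0, zero_pow ht0]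
  · -- positive case: work in the reals
    have hK : K ≠ 0 := fun h => h0 (by simp [h])
    have hw : ∀ j ∈ S, u j + v j ≠ 0 := by
      intro j hj hjz
      exact h0 (by rw [Finset.prod_eq_zero hj hjz, mul_zero])
    have htR : (t : ℝ) ≠ 0 := Nat.cast_ne_zero.mpr ht0
    have hKR : (0 : ℝ) < (K : ℝ) := by exact_mod_cast Nat.pos_of_ne_zero hK
    have hwR : ∀ j ∈ S, (0 : ℝ) < (u j : ℝ) + (v j : ℝ) := by
      intro j hj
      have := Nat.pos_of_ne_zero (hw j hj)
      exact_mod_cast this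
    set z : ι → ℝ := fun j => (u j : ℝ) / ((u j : ℝ) + (v j : ℝ)) with hz_def
    set y : ι → ℝ := fun j => (v j : ℝ) / ((u j : ℝ) + (v j : ℝ)) with hy_def
    have hz_nonneg : ∀ j ∈ S, 0 ≤ z j := fun j hj =>
      div_nonneg (by positivity) (hwR j hj).le
    have hy_nonneg : ∀ j ∈ S, 0 ≤ y j := fun j hj =>
      div_nonneg (by positivity) (hwR j hj).le
    have hweight : ∑ _j ∈ S, (t : ℝ)⁻¹ = 1 := by
      rw [Finset.sum_const, htS, nsmul_eq_mul, mul_inv_cancel₀ htR]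
    have hAMz := Real.geom_mean_le_arith_mean_weighted S (fun _ => (t : ℝ)⁻¹) z
      (fun i _ => by positivity) hweight hz_nonneg
    have hAMy := Real.geom_mean_le_arith_mean_weighted S (fun _ => (t : ℝ)⁻¹) y
      (fun i _ => by positivity) hweight hy_nonneg
    have hkey : (∏ j ∈ S, z j ^ (t : ℝ)⁻¹) + (∏ j ∈ S, y j ^ (t : ℝ)⁻¹) ≤ 1 := by
      refine (add_le_add hAMz hAMy).trans ?_
      rw [← Finset.sum_add_distrib]
      have : ∀ j ∈ S, (t : ℝ)⁻¹ * z j + (t : ℝ)⁻¹ * y j = (t : ℝ)⁻¹ := by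
        intro j hj
        rw [← mul_add, hz_def, hy_def]
        simp only
        rw [← add_div, div_self (hwR j hj).ne', mul_one]
      rw [Finset.sum_congr rfl this, hweight]
    -- abbreviations
    set U : ℝ := ∏ j ∈ S, (u j : ℝ) with hU_def
    set V : ℝ := ∏ j ∈ S, (v j : ℝ) with hV_def
    set W : ℝ := ∏ j ∈ S, ((u j : ℝ) + (v j : ℝ)) with hW_def
    have hU_nonneg : 0 ≤ U := Finset.prod_nonneg fun j _ => by positivity
    have hV_nonneg : 0 ≤ V := Finset.prod_nonneg fun j _ => by positivity
    have hW_pos : 0 < W := Finset.prod_pos hwR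
    have hprod_z : ∏ j ∈ S, z j = U / W := by
      rw [hz_def, hU_def, hW_def, ← Finset.prod_div_distrib]
    have hprod_y : ∏ j ∈ S, y j = V / W := by
      rw [hy_def, hV_def, hW_def, ← Finset.prod_div_distrib]
    have hrw_z : (∏ j ∈ S, z j ^ (t : ℝ)⁻¹) = (U / W) ^ (t : ℝ)⁻¹ := by
      rw [Real.finset_prod_rpow S z hz_nonneg, hprod_z]
    have hrw_y : (∏ j ∈ S, y j ^ (t : ℝ)⁻¹) = (V / W) ^ (t : ℝ)⁻¹ := by
      rw [Real.finset_prod_rpow S y hy_nonneg, hprod_y]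
    -- main superadditivity over the reals
    have hmain : ((K : ℝ) * U) ^ (t : ℝ)⁻¹ + ((K : ℝ) * V) ^ (t : ℝ)⁻¹
        ≤ ((K : ℝ) * W) ^ (t : ℝ)⁻¹ := by
      have hKW_pos : (0 : ℝ) < (K : ℝ) * W := by positivity
      have hzU : (K : ℝ) * U = ((K : ℝ) * W) * (U / W) := by
        field_simp
      have hzV : (K : ℝ) * V = ((K : ℝ) * W) * (V / W) := by
        field_simp
      rw [hzU, hzV, Real.mul_rpow hKW_pos.le (by positivity),
        Real.mul_rpow hKW_pos.le (by positivity), ← mul_add]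
      calc ((K : ℝ) * W) ^ (t : ℝ)⁻¹ * ((U / W) ^ (t : ℝ)⁻¹ + (V / W) ^ (t : ℝ)⁻¹)
          ≤ ((K : ℝ) * W) ^ (t : ℝ)⁻¹ * 1 := by
            refine mul_le_mul_of_nonneg_left ?_ (Real.rpow_nonneg hKW_pos.le _)
            rw [← hrw_z, ← hrw_y]
            exact hkey
        _ = ((K : ℝ) * W) ^ (t : ℝ)⁻¹ := mul_one _
    -- assemble
    have hPle : (P : ℝ) ≤ ((K : ℝ) * U) ^ (t : ℝ)⁻¹ := by
      have h1 : ((P : ℝ) ^ t) ≤ (K : ℝ) * U := by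
        rw [hU_def]
        exact_mod_cast hP
      calc (P : ℝ) = ((P : ℝ) ^ t) ^ (t : ℝ)⁻¹ :=
            (Real.pow_rpow_inv_natCast (by positivity) ht0).symm
        _ ≤ ((K : ℝ) * U) ^ (t : ℝ)⁻¹ :=
            Real.rpow_le_rpow (by positivity) h1 (by positivity)
    have hQle : (Q : ℝ) ≤ ((K : ℝ) * V) ^ (t : ℝ)⁻¹ := by
      have h1 : ((Q : ℝ) ^ t) ≤ (K : ℝ) * V := by
        rw [hV_def]
        exact_mod_cast hQ
      calc (Q : ℝ) = ((Q : ℝ) ^ t) ^ (t : ℝ)⁻¹ :=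
            (Real.pow_rpow_inv_natCast (by positivity) ht0).symm
        _ ≤ ((K : ℝ) * V) ^ (t : ℝ)⁻¹ :=
            Real.rpow_le_rpow (by positivity) h1 (by positivity)
    have hfinal : ((P + Q : ℕ) : ℝ) ^ t ≤ (K : ℝ) * W := by
      have hsum : ((P + Q : ℕ) : ℝ) ≤ ((K : ℝ) * W) ^ (t : ℝ)⁻¹ := by
        push_cast
        exact (add_le_add hPle hQle).trans hmain
      calc ((P + Q : ℕ) : ℝ) ^ t ≤ (((K : ℝ) * W) ^ (t : ℝ)⁻¹) ^ t :=
            pow_le_pow_left₀ (by positivity) hsum t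
        _ = (K : ℝ) * W := Real.rpow_inv_natCast_pow (by positivity) ht0
    have : ((P + Q) ^ t : ℕ) ≤ ((K * ∏ j ∈ S, (u j + v j) : ℕ)) := by
      have : (((P + Q) ^ t : ℕ) : ℝ) ≤ ((K * ∏ j ∈ S, (u j + v j) : ℕ) : ℝ) := by
        push_cast
        push_cast [hW_def] at hfinal
        exact hfinal
      exact_mod_cast this
    exact this

variable {α : Type*} [DecidableEq α]

lemma erase_inter_erase (x : α) (A B : Finset α) :
    A.erase x ∩ B.erase x = (A ∩ B).erase x := by
  ext a
  simp only [Finset.mem_erase, Finset.mem_inter]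
  tauto

/-- Splitting a family of finsets by membership of `x`:
the number of sets equals the number of erased sets plus the number of "doubled" ones. -/
lemma split_card (x : α) (S : Finset (Finset α)) :
    (S.image (fun A => A.erase x)).card
      + ((S.filter (fun A => x ∉ A)) ∩ ((S.filter (fun A => x ∈ A)).image (fun A => A.erase x))).card
      = S.card := by
  have himg : S.image (fun A => A.erase x)
      = (S.filter (fun A => x ∉ A)) ∪ ((S.filter (fun A => x ∈ A)).image (fun A => A.erase x)) := by
    ext B
    simp only [Finset.mem_image, Finset.mem_union, Finset.mem_filter]
    constructor
    · rintro ⟨A, hA, rfl⟩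
      by_cases hx : x ∈ A
      · exact Or.inr ⟨A, ⟨hA, hx⟩, rfl⟩
      · exact Or.inl ⟨by rwa [Finset.erase_eq_of_notMem hx], Finset.notMem_erase _ _⟩
    · rintro (⟨hB, hx⟩ | ⟨A, ⟨hA, hx⟩, rfl⟩)
      · exact ⟨B, hB, Finset.erase_eq_of_notMem hx⟩
      · exact ⟨A, hA, rfl⟩
  have hinj : ((S.filter (fun A => x ∈ A)).image (fun A => A.erase x)).card
      = (S.filter (fun A => x ∈ A)).card := by
    refine Finset.card_image_of_injOn ?_
    intro A hA B hB h
    simp only [Finset.coe_filter, Set.mem_setOf_eq] at hA hB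
    have h' : A.erase x = B.erase x := h
    rw [← Finset.insert_erase hA.2, h', Finset.insert_erase hB.2]
  rw [himg, Finset.card_union_add_card_inter, hinj]
  rw [add_comm]
  exact Finset.card_filter_add_card_filter_not _

/-- Shearer's lemma, relativized to a finite ground set `s`. -/
lemma shearer_aux (t : ℕ) (ht : 1 ≤ t) (s : Finset α) :
    ∀ {m : ℕ} (F : Fin m → Finset α) (𝓐 : Finset (Finset α)),
      (∀ i ∈ s, t ≤ (Finset.univ.filter (fun j => i ∈ F j)).card) →
      (∀ A ∈ 𝓐, A ⊆ s) →
      𝓐.card ^ t ≤ ∏ j : Fin m, (𝓐.image (fun A => A ∩ F j)).card := by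
  induction s using Finset.induction_on with
  | empty =>
    intro m F 𝓐 _ hsub
    rcases 𝓐.eq_empty_or_nonempty with rfl | hne
    · simp [zero_pow (Nat.one_le_iff_ne_zero.mp ht)]
    · have hcard : 𝓐.card ≤ 1 := by
        refine Finset.card_le_one.mpr fun A hA B hB => ?_
        have hA' := Finset.subset_empty.mp (hsub A hA)
        have hB' := Finset.subset_empty.mp (hsub B hB)
        rw [hA', hB']
      calc 𝓐.card ^ t ≤ 1 ^ t := Nat.pow_le_pow_left hcard t
        _ = 1 := one_pow t
        _ ≤ _ := Finset.one_le_prod' fun j _ => Finset.card_pos.mpr (hne.image _)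
  | @insert x s hx ih =>
    intro m F 𝓐 hcov hsub
    classical
    -- erased family and the doubled family
    set 𝓐' : Finset (Finset α) := 𝓐.image (fun A => A.erase x) with h𝓐'
    set 𝓓 : Finset (Finset α) :=
      (𝓐.filter (fun A => x ∉ A)) ∩ ((𝓐.filter (fun A => x ∈ A)).image (fun A => A.erase x))
      with h𝓓
    have hcard : 𝓐'.card + 𝓓.card = 𝓐.card := split_card x 𝓐
    set F' : Fin m → Finset α := fun j => (F j).erase x with hF'
    -- covering condition on s
    have hcov' : ∀ i ∈ s, t ≤ (Finset.univ.filter (fun j => i ∈ F' j)).card := by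
      intro i hi
      have hix : i ≠ x := fun h => hx (h ▸ hi)
      have : (Finset.univ.filter (fun j => i ∈ F' j))
          = (Finset.univ.filter (fun j => i ∈ F j)) := by
        refine Finset.filter_congr fun j _ => ?_
        simp [hF', Finset.mem_erase, hix]
      rw [this]
      exact hcov i (Finset.mem_insert_of_mem hi)
    -- subset conditions
    have hsub' : ∀ A ∈ 𝓐', A ⊆ s := by
      intro B hB
      obtain ⟨A, hA, rfl⟩ := Finset.mem_image.mp hB
      intro a ha
      have := hsub A hA (Finset.mem_of_mem_erase ha)
      rcases Finset.mem_insert.mp this with rfl | h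
      · exact absurd rfl (Finset.ne_of_mem_erase ha)
      · exact h
    have h𝓓sub : 𝓓 ⊆ 𝓐' := by
      rw [h𝓓, h𝓐']
      intro B hB
      rcases Finset.mem_inter.mp hB with ⟨hB0, hB1⟩
      rcases Finset.mem_filter.mp hB0 with ⟨hB𝓐, hxB⟩
      exact Finset.mem_image.mpr ⟨B, hB𝓐, Finset.erase_eq_of_notMem hxB⟩
    have hsub𝓓 : ∀ A ∈ 𝓓, A ⊆ s := fun A hA => hsub' A (h𝓓sub hA)
    -- apply IH
    have hIH1 := ih F' 𝓐' hcov' hsub'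
    have hIH2 := ih F' 𝓓 hcov' hsub𝓓
    set a : Fin m → ℕ := fun j => (𝓐'.image (fun A => A ∩ F' j)).card with ha
    set d : Fin m → ℕ := fun j => (𝓓.image (fun A => A ∩ F' j)).card with hd
    set c : Fin m → ℕ := fun j => (𝓐.image (fun A => A ∩ F j)).card with hc
    -- trace image identity
    have himg : ∀ j, 𝓐'.image (fun A => A ∩ F' j)
        = (𝓐.image (fun A => A ∩ F j)).image (fun B => B.erase x) := by
      intro j
      rw [h𝓐', Finset.image_image, Finset.image_image]
      refine Finset.image_congr fun A _ => ?_
      simp only [Function.comp_apply, hF']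
      exact erase_inter_erase x A (F j)
    -- (g1) a j ≤ c j
    have hg1 : ∀ j, a j ≤ c j := by
      intro j
      rw [ha, hc]
      simp only
      rw [himg j]
      exact Finset.card_image_le
    -- (g3) d j ≤ a j
    have hg3 : ∀ j, d j ≤ a j := fun j =>
      Finset.card_le_card (Finset.image_subset_image h𝓓sub)
    -- (g2) for j with x ∈ F j : a j + d j ≤ c j
    have hg2 : ∀ j, x ∈ F j → a j + d j ≤ c j := by
      intro j hxFj
      set T : Finset (Finset α) := 𝓐.image (fun A => A ∩ F j) with hT
      have hsplit := split_card x T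
      have haj : a j = (T.image (fun B => B.erase x)).card := by
        rw [ha]; simp only; rw [himg j, hT]
      have hdj : d j ≤ ((T.filter (fun B => x ∉ B))
          ∩ ((T.filter (fun B => x ∈ B)).image (fun B => B.erase x))).card := by
        refine Finset.card_le_card ?_
        intro D hD
        obtain ⟨B, hB𝓓, rfl⟩ := Finset.mem_image.mp hD
        rcases Finset.mem_inter.mp hB𝓓 with ⟨hB0, hB1⟩
        rcases Finset.mem_filter.mp hB0 with ⟨hB𝓐, hxB⟩
        obtain ⟨A, hAf, hAe⟩ := Finset.mem_image.mp hB1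
        rcases Finset.mem_filter.mp hAf with ⟨hA𝓐, hxA⟩
        have hxD : x ∉ B ∩ F' j := fun h => (Finset.notMem_erase x (F j))
          (Finset.mem_inter.mp h).2
        have hBF : B ∩ F' j = B ∩ F j := by
          ext a'
          simp only [Finset.mem_inter, hF', Finset.mem_erase]
          constructor
          · rintro ⟨h1, _, h2⟩; exact ⟨h1, h2⟩
          · rintro ⟨h1, h2⟩
            exact ⟨h1, fun he => hxB (he ▸ h1), h2⟩
        refine Finset.mem_inter.mpr ⟨?_, ?_⟩
        · refine Finset.mem_filter.mpr ⟨?_, hxD⟩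
          rw [hBF]
          exact Finset.mem_image.mpr ⟨B, hB𝓐, rfl⟩
        · -- `insert x (B ∩ F' j) = A ∩ F j` where `A = insert x B`
          refine Finset.mem_image.mpr ⟨A ∩ F j, ?_, ?_⟩
          · refine Finset.mem_filter.mpr ⟨Finset.mem_image.mpr ⟨A, hA𝓐, rfl⟩, ?_⟩
            exact Finset.mem_inter.mpr ⟨hxA, hxFj⟩
          · -- (A ∩ F j).erase x = B ∩ F' j
            rw [← erase_inter_erase, hAe]
      calc a j + d j
          ≤ (T.image (fun B => B.erase x)).card
            + ((T.filter (fun B => x ∉ B))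
              ∩ ((T.filter (fun B => x ∈ B)).image (fun B => B.erase x))).card := by
            rw [haj]; exact Nat.add_le_add_left hdj _
        _ = T.card := hsplit
        _ = c j := by rw [hc]
    -- pick a set S of exactly t indices covering x
    obtain ⟨S, hSsub, hScard⟩ :=
      Finset.exists_subset_card_eq (hcov x (Finset.mem_insert_self x s))
    have hxS : ∀ j ∈ S, x ∈ F j := by
      intro j hj
      have := hSsub hj
      exact (Finset.mem_filter.mp this).2
    -- assemble
    rw [← hcard]
    have hP : 𝓐'.card ^ t ≤ (∏ j ∈ Sᶜ, a j) * ∏ j ∈ S, a j := by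
      calc 𝓐'.card ^ t ≤ ∏ j : Fin m, a j := hIH1
        _ = (∏ j ∈ S, a j) * ∏ j ∈ Sᶜ, a j := (Finset.prod_mul_prod_compl S a).symm
        _ = (∏ j ∈ Sᶜ, a j) * ∏ j ∈ S, a j := mul_comm _ _
    have hQ : 𝓓.card ^ t ≤ (∏ j ∈ Sᶜ, a j) * ∏ j ∈ S, d j := by
      calc 𝓓.card ^ t ≤ ∏ j : Fin m, d j := hIH2
        _ = (∏ j ∈ S, d j) * ∏ j ∈ Sᶜ, d j := (Finset.prod_mul_prod_compl S d).symm
        _ ≤ (∏ j ∈ S, d j) * ∏ j ∈ Sᶜ, a j := by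
            refine Nat.mul_le_mul_left _ (Finset.prod_le_prod' fun j _ => hg3 j)
        _ = (∏ j ∈ Sᶜ, a j) * ∏ j ∈ S, d j := mul_comm _ _
    have hmahler := mahler_nat_aux S hScard ht (∏ j ∈ Sᶜ, a j) 𝓐'.card 𝓓.card a d hP hQ
    calc (𝓐'.card + 𝓓.card) ^ t
        ≤ (∏ j ∈ Sᶜ, a j) * ∏ j ∈ S, (a j + d j) := hmahler
      _ ≤ (∏ j ∈ Sᶜ, c j) * ∏ j ∈ S, c j := by
          refine Nat.mul_le_mul ?_ ?_
          · exact Finset.prod_le_prod' fun j _ => hg1 j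
          · exact Finset.prod_le_prod' fun j hj => hg2 j (hxS j hj)
      _ = ∏ j : Fin m, c j := by
          rw [mul_comm]
          exact Finset.prod_mul_prod_compl S c

/-- Combinatorial Shearer's lemma: if every `i ∈ [n]` lies in at least `t ≥ 1` members of
the (multi)family `F`, then `|𝓐|ᵗ ≤ Π_{F∈𝓕} |trace_F(𝓐)|`. -/
theorem combinatorial_shearer {n m t : ℕ} (ht : 1 ≤ t)
    (F : Fin m → Finset (Fin n))
    (hcov : ∀ i : Fin n, t ≤ (Finset.univ.filter (fun j => i ∈ F j)).card)
    (𝓐 : Finset (Finset (Fin n))) :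
    𝓐.card ^ t ≤ ∏ j : Fin m, (𝓐.image (fun A => A ∩ F j)).card := by
  exact shearer_aux t ht Finset.univ F 𝓐 (fun i _ => hcov i)
    (fun A _ => Finset.subset_univ A)
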